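/- arXiv:1610.03142 — 3 statements merged into one kernel-verified Lean document; each statement's English description precedes it below -/
import Mathlib

section
/- If F = {f_x}_{x in G} is the G-harmonic frame for C^m generated by an m-element subset S of G, then for every x, y in G one has n^2 * |<f_x, f_y>|^2 = sum_{xi in G} rho_{y-x}(xi) * ||X_xi||_{H.S.}^2, where X_xi is the xi-th G-modulation operator of F. -/
open Finset

/-- The underlying finite abelian group `G = ZMod n₁ ⊕ ... ⊕ ZMod n_k`
(a fixed cyclic decomposition). -/
abbrev PiG {k : ℕ} (nn : Fin k → ℕ) : Type := ∀ i, ZMod (nn i)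

/-- The character `ρ_x(y) = exp(2πi (x(1)y(1)/n₁ + ... + x(k)y(k)/n_k))`. -/
noncomputable def rho {k : ℕ} (nn : Fin k → ℕ) (x y : PiG nn) : ℂ :=
  Complex.exp (2 * (Real.pi : ℂ) * Complex.I *
    ∑ i, ((x i).val : ℂ) * ((y i).val : ℂ) / ((nn i : ℕ) : ℂ))

/-- The vector `f_x = (1/√m) (ρ_{g_j}(x))_{j=1}^m` of the `G`-harmonic frame
generated by `S = {g_1, ..., g_m}`, as a function `Fin m → ℂ`. -/
noncomputable def harmFun {k m : ℕ} (nn : Fin k → ℕ) (g : Fin m → PiG nn) (x : PiG nn) :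
    Fin m → ℂ :=
  fun j => ((Real.sqrt m : ℝ) : ℂ)⁻¹ * rho nn (g j) x

/-- The `ξ`-th `G`-modulation operator `X_ξ = ∑_x ρ_ξ(x) f_x ⊗ f_x^*` of the harmonic
frame, as an `m × m` matrix with entries `(X_ξ)_{a,b} = ∑_x ρ_ξ(x) f_x(a) conj(f_x(b))`. -/
noncomputable def modOp {k m : ℕ} (nn : Fin k → ℕ) [∀ i, NeZero (nn i)]
    (g : Fin m → PiG nn) (ξ : PiG nn) : Matrix (Fin m) (Fin m) ℂ :=
  ∑ x : PiG nn, rho nn ξ x •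
    Matrix.vecMulVec (harmFun nn g x) (fun b => (starRingEnd ℂ) (harmFun nn g x b))

/-! ### Auxiliary lemmas -/

/-- `eC n v = exp(2πi v / n)`. -/
noncomputable def eC (n v : ℕ) : ℂ :=
  Complex.exp (2 * (Real.pi : ℂ) * Complex.I * v / n)

lemma eC_zero (n : ℕ) : eC n 0 = 1 := by simp [eC]

lemma eC_add (n u v : ℕ) : eC n (u + v) = eC n u * eC n v := by
  rw [eC, eC, eC, ← Complex.exp_add]
  congr 1
  push_cast
  ring

lemma eC_congr {n : ℕ} (hn : n ≠ 0) {u v : ℕ} (h : u ≡ v [MOD n]) : eC n u = eC n v := by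
  obtain ⟨t, ht⟩ := h.dvd
  have hu : (u : ℂ) = (v : ℂ) - (n : ℂ) * (t : ℂ) := by
    have h2 : (u : ℤ) = (v : ℤ) - n * t := by linarith
    have := congrArg (fun z : ℤ => (z : ℂ)) h2
    push_cast at this
    exact this
  have hn' : (n : ℂ) ≠ 0 := Nat.cast_ne_zero.mpr hn
  rw [eC, eC, hu]
  have key : 2 * (Real.pi : ℂ) * Complex.I * ((v:ℂ) - (n:ℂ)*(t:ℂ)) / n
      = 2 * (Real.pi : ℂ) * Complex.I * v / n + ((-t : ℤ) : ℂ) * (2 * Real.pi * Complex.I) := by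
    push_cast
    field_simp
    ring
  rw [key, Complex.exp_add, Complex.exp_int_mul_two_pi_mul_I, mul_one]

lemma eC_ne_one {n v : ℕ} (h0 : 0 < v) (h1 : v < n) : eC n v ≠ 1 := by
  intro h
  rw [eC, Complex.exp_eq_one_iff] at h
  obtain ⟨t, ht⟩ := h
  have hn : (n : ℂ) ≠ 0 := Nat.cast_ne_zero.mpr (by omega)
  have h2pi : (2 * (Real.pi : ℂ) * Complex.I) ≠ 0 := by
    simp [Real.pi_ne_zero, Complex.I_ne_zero]
  have hvt : (v : ℂ) = (t : ℂ) * n := by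
    field_simp at ht
    linear_combination ht
  have hvz : (v : ℤ) = t * n := by exact_mod_cast hvt
  have : (n : ℤ) ≤ v := Int.le_of_dvd (by exact_mod_cast h0) ⟨t, by linarith⟩
  omega

lemma rho_eq_prod {k : ℕ} (nn : Fin k → ℕ) (x y : PiG nn) :
    rho nn x y = ∏ i, eC (nn i) ((x i).val * (y i).val) := by
  rw [rho, Finset.mul_sum, Complex.exp_sum]
  refine Finset.prod_congr rfl fun i _ => ?_
  rw [eC]
  congr 1
  push_cast
  ring

section RhoLemmas
variable {k : ℕ} (nn : Fin k → ℕ)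

lemma rho_comm (a b : PiG nn) : rho nn a b = rho nn b a := by
  rw [rho, rho]
  congr 2
  exact Finset.sum_congr rfl fun i _ => by ring

variable [∀ i, NeZero (nn i)]

lemma rho_zero_right (a : PiG nn) : rho nn a 0 = 1 := by
  simp [rho]

lemma rho_add_right (a b c : PiG nn) :
    rho nn a (b + c) = rho nn a b * rho nn a c := by
  rw [rho_eq_prod, rho_eq_prod, rho_eq_prod, ← Finset.prod_mul_distrib]
  refine Finset.prod_congr rfl fun i _ => ?_
  rw [← eC_add]
  refine eC_congr (NeZero.ne _) ?_
  rw [← Nat.mul_add]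
  refine Nat.ModEq.mul_left _ ?_
  show ((b + c) i).val ≡ (b i).val + (c i).val [MOD nn i]
  rw [Pi.add_apply, ZMod.val_add]
  exact Nat.mod_modEq _ _

lemma rho_neg_right (a b : PiG nn) : rho nn a (-b) = (rho nn a b)⁻¹ := by
  have h := rho_add_right nn a b (-b)
  rw [add_neg_cancel, rho_zero_right] at h
  exact (inv_eq_of_mul_eq_one_right h.symm).symm

lemma conj_rho (a b : PiG nn) : (starRingEnd ℂ) (rho nn a b) = rho nn a (-b) := by
  rw [rho_neg_right, rho]
  rw [← Complex.exp_conj, ← Complex.exp_neg]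
  congr 1
  simp only [map_mul, map_sum, map_div₀, Complex.conj_I, map_natCast, map_ofNat,
    Complex.conj_ofReal]
  ring

lemma sum_rho (ξ : PiG nn) :
    ∑ x : PiG nn, rho nn ξ x = if ξ = 0 then (Fintype.card (PiG nn) : ℂ) else 0 := by
  split_ifs with h
  · subst h
    have : ∀ x : PiG nn, rho nn 0 x = 1 := fun x => by
      rw [rho_comm]; exact rho_zero_right nn x
    simp [this]
  · obtain ⟨i, hi⟩ : ∃ i, ξ i ≠ 0 := by
      by_contra hc
      push_neg at hc
      exact h (funext hc)
    have h2 : 1 < nn i := by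
      rcases Nat.lt_or_ge 1 (nn i) with h' | h'
      · exact h'
      · exfalso
        have hn1 : nn i = 1 := by have := NeZero.ne (nn i); omega
        apply hi
        have hlt : (ξ i).val < nn i := ZMod.val_lt _
        exact (ZMod.val_eq_zero _).mp (by omega)
    set y : PiG nn := Pi.single i 1 with hy
    have hval : rho nn ξ y ≠ 1 := by
      rw [rho_eq_prod]
      rw [Finset.prod_eq_single i]
      · rw [hy, Pi.single_eq_same, ZMod.val_one_eq_one_mod]
        rw [Nat.mod_eq_of_lt h2, mul_one]
        exact eC_ne_one
          (Nat.pos_of_ne_zero (fun hv => hi ((ZMod.val_eq_zero _).mp hv))) (ZMod.val_lt _)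
      · intro j _ hj
        rw [hy, Pi.single_eq_of_ne hj]
        simp [eC_zero]
      · simp
    have key : rho nn ξ y * ∑ x : PiG nn, rho nn ξ x = ∑ x : PiG nn, rho nn ξ x := by
      rw [Finset.mul_sum]
      have : ∀ x : PiG nn, rho nn ξ y * rho nn ξ x = rho nn ξ (y + x) := fun x =>
        (rho_add_right nn ξ y x).symm
      simp_rw [this]
      exact Fintype.sum_equiv (Equiv.addLeft y) _ _ fun x => rfl
    have hz := sub_eq_zero.mpr key
    rw [← sub_one_mul] at hz
    rcases mul_eq_zero.mp hz with h' | h'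
    · exact absurd (by linear_combination h') hval
    · exact h'

end RhoLemmas

lemma sqrt_inv_sq (m : ℕ) :
    (((Real.sqrt m : ℝ) : ℂ))⁻¹ * (((Real.sqrt m : ℝ) : ℂ))⁻¹ = ((m : ℕ) : ℂ)⁻¹ := by
  rw [← mul_inv, ← Complex.ofReal_mul, Real.mul_self_sqrt (Nat.cast_nonneg m)]
  push_cast
  ring

section ModLemmas
variable {k m : ℕ} (nn : Fin k → ℕ) [∀ i, NeZero (nn i)] (g : Fin m → PiG nn)

lemma modOp_apply (ξ : PiG nn) (a b : Fin m) :
    modOp nn g ξ a b =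
      if ξ + g a - g b = 0 then (Fintype.card (PiG nn) : ℂ) / m else 0 := by
  have key : ∀ x : PiG nn,
      rho nn ξ x * (harmFun nn g x a * (starRingEnd ℂ) (harmFun nn g x b))
        = (m : ℂ)⁻¹ * rho nn (ξ + g a - g b) x := by
    intro x
    simp only [harmFun, map_mul, map_inv₀, Complex.conj_ofReal]
    rw [rho_comm nn (g b) x, conj_rho, rho_comm nn (g a), rho_comm nn ξ,
      rho_comm nn (ξ + g a - g b)]
    rw [show ξ + g a - g b = ξ + (g a + -(g b)) by abel, rho_add_right, rho_add_right]
    rw [← sqrt_inv_sq m]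
    ring
  rw [modOp]
  simp only [Matrix.sum_apply, Matrix.smul_apply, Matrix.vecMulVec_apply, smul_eq_mul]
  rw [Finset.sum_congr rfl fun x _ => key x, ← Finset.mul_sum, sum_rho]
  split_ifs
  · rw [div_eq_inv_mul]
  · rw [mul_zero]

lemma trace_modOp (ξ : PiG nn) :
    (modOp nn g ξ * (modOp nn g ξ).conjTranspose).trace =
      ∑ a : Fin m, ∑ b : Fin m,
        if ξ = g b - g a then ((Fintype.card (PiG nn) : ℂ) / m) ^ 2 else 0 := by
  rw [Matrix.trace]
  simp only [Matrix.diag_apply, Matrix.mul_apply, Matrix.conjTranspose_apply]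
  refine Finset.sum_congr rfl fun a _ => Finset.sum_congr rfl fun b _ => ?_
  rw [modOp_apply nn g ξ a b]
  have hiff : ξ + g a - g b = 0 ↔ ξ = g b - g a := by
    rw [sub_eq_zero, eq_sub_iff_add_eq]
  by_cases hc : ξ = g b - g a
  · rw [if_pos (hiff.mpr hc), if_pos hc]
    simp only [Complex.star_def, map_div₀, Complex.conj_natCast]
    ring
  · rw [if_neg (fun h => hc (hiff.mp h)), if_neg hc]
    simp

end ModLemmas

/-- If `F = {f_x}` is the `G`-harmonic frame for `ℂ^m` generated by an
`m`-element subset `S` of `G`, then for every `x, y ∈ G`,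
`n² |⟨f_x, f_y⟩|² = ∑_{ξ ∈ G} ρ_{y-x}(ξ) ‖X_ξ‖²_{H.S.}`,
where `‖X_ξ‖²_{H.S.} = trace(X_ξ X_ξ^*)`. -/
theorem statement7 {k m : ℕ} (nn : Fin k → ℕ) [∀ i, NeZero (nn i)] (hm : 0 < m)
    (g : Fin m → PiG nn) (hg : Function.Injective g) (x y : PiG nn) :
    (Fintype.card (PiG nn) : ℂ) ^ 2 *
        (‖∑ j, (starRingEnd ℂ) (harmFun nn g x j) * harmFun nn g y j‖ : ℂ) ^ 2 =
      ∑ ξ : PiG nn, rho nn (y - x) ξ *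
        (modOp nn g ξ * (modOp nn g ξ).conjTranspose).trace := by
  set n : ℂ := (Fintype.card (PiG nn) : ℂ) with hn
  set z : PiG nn := y - x with hzdef
  set S : ℂ := ∑ j, (starRingEnd ℂ) (harmFun nn g x j) * harmFun nn g y j with hSdef
  set T : ℂ := ∑ j, rho nn z (g j) with hTdef
  -- inner product in terms of T
  have hS : S = (m : ℂ)⁻¹ * T := by
    rw [hSdef, hTdef, Finset.mul_sum]
    refine Finset.sum_congr rfl fun j _ => ?_
    simp only [harmFun, map_mul, map_inv₀, Complex.conj_ofReal]
    calc ((Real.sqrt m : ℝ) : ℂ)⁻¹ * (starRingEnd ℂ) (rho nn (g j) x) *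
          (((Real.sqrt m : ℝ) : ℂ)⁻¹ * rho nn (g j) y)
        = (((Real.sqrt m : ℝ) : ℂ)⁻¹ * ((Real.sqrt m : ℝ) : ℂ)⁻¹) *
            (rho nn (g j) (-x) * rho nn (g j) y) := by rw [conj_rho]; ring
      _ = (m : ℂ)⁻¹ * rho nn z (g j) := by
          rw [sqrt_inv_sq m, ← rho_add_right, neg_add_eq_sub, ← hzdef, rho_comm]
  -- |S|² = S * conj S
  have habs : ((‖S‖ : ℝ) : ℂ) ^ 2 = S * (starRingEnd ℂ) S := by
    rw [← Complex.ofReal_pow, Complex.sq_norm, Complex.mul_conj]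
  -- conj T
  have hconjT : (starRingEnd ℂ) T = ∑ j, rho nn z (-(g j)) := by
    rw [hTdef, map_sum]
    exact Finset.sum_congr rfl fun j _ => conj_rho nn z (g j)
  -- the RHS
  have hRHS : ∑ ξ : PiG nn, rho nn z ξ *
        (modOp nn g ξ * (modOp nn g ξ).conjTranspose).trace
      = (n / m) ^ 2 * ∑ a : Fin m, ∑ b : Fin m, rho nn z (g b - g a) := by
    have step : ∀ c : PiG nn,
        ∑ ξ : PiG nn, rho nn z ξ * (if ξ = c then (n / m) ^ 2 else 0)
          = rho nn z c * (n / m) ^ 2 := by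
      intro c
      simp [mul_ite, Finset.sum_ite_eq']
    calc ∑ ξ : PiG nn, rho nn z ξ *
          (modOp nn g ξ * (modOp nn g ξ).conjTranspose).trace
        = ∑ ξ : PiG nn, ∑ a : Fin m, ∑ b : Fin m,
            rho nn z ξ * (if ξ = g b - g a then (n / m) ^ 2 else 0) := by
          refine Finset.sum_congr rfl fun ξ _ => ?_
          rw [trace_modOp nn g ξ, Finset.mul_sum]
          exact Finset.sum_congr rfl fun a _ => by rw [Finset.mul_sum]
      _ = ∑ a : Fin m, ∑ ξ : PiG nn, ∑ b : Fin m,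
            rho nn z ξ * (if ξ = g b - g a then (n / m) ^ 2 else 0) := Finset.sum_comm
      _ = ∑ a : Fin m, ∑ b : Fin m, ∑ ξ : PiG nn,
            rho nn z ξ * (if ξ = g b - g a then (n / m) ^ 2 else 0) := by
          exact Finset.sum_congr rfl fun a _ => Finset.sum_comm
      _ = ∑ a : Fin m, ∑ b : Fin m, rho nn z (g b - g a) * (n / m) ^ 2 := by
          exact Finset.sum_congr rfl fun a _ => Finset.sum_congr rfl fun b _ => step _
      _ = (n / m) ^ 2 * ∑ a : Fin m, ∑ b : Fin m, rho nn z (g b - g a) := by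
          rw [Finset.mul_sum]
          refine Finset.sum_congr rfl fun a _ => ?_
          rw [Finset.mul_sum]
          exact Finset.sum_congr rfl fun b _ => mul_comm _ _
  rw [hRHS, habs, hS]
  have hTT : T * (starRingEnd ℂ) T = ∑ a : Fin m, ∑ b : Fin m, rho nn z (g a - g b) := by
    rw [hconjT, hTdef, Finset.sum_mul_sum]
    refine Finset.sum_congr rfl fun a _ => Finset.sum_congr rfl fun b _ => ?_
    rw [← rho_add_right, ← sub_eq_add_neg]
  have hswap : ∑ a : Fin m, ∑ b : Fin m, rho nn z (g b - g a)
      = ∑ a : Fin m, ∑ b : Fin m, rho nn z (g a - g b) := Finset.sum_comm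
  rw [hswap, ← hTT]
  have hconjmul : (starRingEnd ℂ) ((m : ℂ)⁻¹ * T) = (m : ℂ)⁻¹ * (starRingEnd ℂ) T := by
    rw [map_mul, map_inv₀, Complex.conj_natCast]
  rw [hconjmul]
  ring
end

section
/- Let S be an (n, m, lambda, mu)-partial difference set for G with lambda != mu (so S is reversible, i.e. -S = S), and let F be the biangular G-harmonic frame for C^m generated by S. Then: (1) if 0_G is in S, the G-harmonic frame for C^{m-1} generated by S \ {0_G} is either equiangular or biangular; and (2) if 0_G is not in S, the G-harmonic frame for C^{m+1} generated by S union {0_G} is either equiangular or biangular. -/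
open Finset

lemma rho_zero {k : ℕ} (nn : Fin k → ℕ) [∀ i, NeZero (nn i)] (g : PiG nn) :
    rho nn g 0 = 1 := by
  simp [rho]

lemma rho_comm_s14 {k : ℕ} (nn : Fin k → ℕ) (x y : PiG nn) : rho nn x y = rho nn y x := by
  unfold rho
  congr 1
  congr 1
  exact Finset.sum_congr rfl fun i _ => by ring

lemma rho_add_right_s14 {k : ℕ} (nn : Fin k → ℕ) [∀ i, NeZero (nn i)] (g x y : PiG nn) :
    rho nn g (x + y) = rho nn g x * rho nn g y := by
  set q : Fin k → ℕ := fun i => ((x i).val + (y i).val) / nn i with hqdef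
  have h1 : ∀ i, ((x i).val : ℂ) + ((y i).val : ℂ)
      = (((x + y) i).val : ℂ) + (nn i : ℂ) * (q i : ℂ) := by
    intro i
    have h : (x i).val + (y i).val = ((x + y) i).val + nn i * q i := by
      show _ = (x i + y i).val + _
      rw [ZMod.val_add, Nat.mod_add_div]
    have h2 := congrArg (Nat.cast (R := ℂ)) h
    rw [Nat.cast_add, Nat.cast_add, Nat.cast_mul] at h2
    exact h2
  have hsum : (∑ i, ((g i).val : ℂ) * ((x i).val : ℂ) / ((nn i : ℕ) : ℂ))
      + (∑ i, ((g i).val : ℂ) * ((y i).val : ℂ) / ((nn i : ℕ) : ℂ))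
      = (∑ i, ((g i).val : ℂ) * (((x + y) i).val : ℂ) / ((nn i : ℕ) : ℂ))
        + ((∑ i, (g i).val * q i : ℕ) : ℂ) := by
    simp only [Nat.cast_sum, Nat.cast_mul]
    rw [← Finset.sum_add_distrib, ← Finset.sum_add_distrib]
    refine Finset.sum_congr rfl fun i _ => ?_
    have hn : (nn i : ℂ) ≠ 0 := Nat.cast_ne_zero.2 (NeZero.ne _)
    have e : ((g i).val : ℂ) * ((x i).val : ℂ) + ((g i).val : ℂ) * ((y i).val : ℂ)
        = ((g i).val : ℂ) * (((x + y) i).val : ℂ) + (((g i).val : ℂ) * ((q i : ℕ) : ℂ)) * (nn i : ℂ) := by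
      linear_combination ((g i).val : ℂ) * h1 i
    rw [← add_div, e, add_div, mul_div_cancel_right₀ _ hn]
  have hexp : (2 * (Real.pi : ℂ) * Complex.I *
        ∑ i, ((g i).val : ℂ) * ((x i).val : ℂ) / ((nn i : ℕ) : ℂ))
      + (2 * (Real.pi : ℂ) * Complex.I *
        ∑ i, ((g i).val : ℂ) * ((y i).val : ℂ) / ((nn i : ℕ) : ℂ))
      = (2 * (Real.pi : ℂ) * Complex.I *
        ∑ i, ((g i).val : ℂ) * (((x + y) i).val : ℂ) / ((nn i : ℕ) : ℂ))
      + ((∑ i, (g i).val * q i : ℕ) : ℤ) * (2 * (Real.pi : ℂ) * Complex.I) := by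
    simp only [Int.cast_natCast]
    linear_combination (2 * (Real.pi : ℂ) * Complex.I) * hsum
  rw [rho, rho, rho, ← Complex.exp_add, hexp, Complex.exp_add,
    Complex.exp_int_mul_two_pi_mul_I, mul_one]

lemma rho_ne_zero {k : ℕ} (nn : Fin k → ℕ) (g x : PiG nn) : rho nn g x ≠ 0 :=
  Complex.exp_ne_zero _

lemma conj_rho_s14 {k : ℕ} (nn : Fin k → ℕ) [∀ i, NeZero (nn i)] (g x : PiG nn) :
    (starRingEnd ℂ) (rho nn g x) = rho nn g (-x) := by
  have h1 : rho nn g (-x) * rho nn g x = 1 := by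
    rw [← rho_add_right_s14, neg_add_cancel, rho_zero]
  have hS : (starRingEnd ℂ) (∑ i, ((g i).val : ℂ) * ((x i).val : ℂ) / ((nn i : ℕ) : ℂ))
      = ∑ i, ((g i).val : ℂ) * ((x i).val : ℂ) / ((nn i : ℕ) : ℂ) := by
    rw [map_sum]
    refine Finset.sum_congr rfl fun i _ => ?_
    rw [map_div₀, map_mul, map_natCast, map_natCast, map_natCast]
  have h2 : (starRingEnd ℂ) (rho nn g x) = (rho nn g x)⁻¹ := by
    rw [rho, ← Complex.exp_conj, ← Complex.exp_neg]
    congr 1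
    rw [map_mul, hS, map_mul, map_mul]
    simp only [Complex.conj_I, map_ofNat]
    rw [Complex.conj_ofReal]
    ring
  rw [h2]
  exact (eq_inv_of_mul_eq_one_left h1).symm

lemma sum_rho_eq_zero {k : ℕ} (nn : Fin k → ℕ) [∀ i, NeZero (nn i)] (z : PiG nn)
    (hz : z ≠ 0) : ∑ d : PiG nn, rho nn d z = 0 := by
  -- find i with z i ≠ 0
  have hex : ∃ i, z i ≠ 0 := by
    by_contra h
    push_neg at h
    exact hz (funext h)
  obtain ⟨i, hi⟩ := hex
  have hn1 : 1 < nn i := by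
    rcases Nat.lt_or_ge 1 (nn i) with h | h
    · exact h
    · exfalso
      have h0 := NeZero.ne (nn i)
      have h1 : nn i = 1 := by omega
      apply hi
      have : Subsingleton (ZMod (nn i)) := by rw [h1]; infer_instance
      exact Subsingleton.elim _ _
  haveI : Fact (1 < nn i) := ⟨hn1⟩
  classical
  set d₀ : PiG nn := Pi.single i 1 with hd₀
  have hval : ∀ j, j ≠ i → ((d₀ j).val : ℂ) = 0 := by
    intro j hj
    rw [hd₀, Pi.single_eq_of_ne hj]
    simp
  have hrho : rho nn d₀ z = Complex.exp (2 * (Real.pi : ℂ) * Complex.I *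
      (((z i).val : ℂ) / (nn i : ℂ))) := by
    rw [rho]
    congr 1
    congr 1
    rw [Finset.sum_eq_single i]
    · rw [hd₀, Pi.single_eq_same, ZMod.val_one, Nat.cast_one, one_mul]
    · intro j _ hj
      rw [hval j hj, zero_mul, zero_div]
    · intro h
      exact absurd (Finset.mem_univ i) h
  have hne1 : rho nn d₀ z ≠ 1 := by
    rw [hrho]
    intro hcon
    rw [Complex.exp_eq_one_iff] at hcon
    obtain ⟨t, ht⟩ := hcon
    have h2pi : (2 * (Real.pi : ℂ) * Complex.I) ≠ 0 := by
      simp [Real.pi_ne_zero, Complex.I_ne_zero]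
    have hfrac : ((z i).val : ℂ) / (nn i : ℂ) = (t : ℂ) := by
      have := ht
      rw [mul_comm (t : ℂ) _] at this
      exact mul_left_cancel₀ h2pi this
    have hnn : (nn i : ℂ) ≠ 0 := Nat.cast_ne_zero.2 (NeZero.ne _)
    rw [div_eq_iff hnn] at hfrac
    have hint : ((z i).val : ℤ) = t * (nn i : ℤ) := by exact_mod_cast hfrac
    have hvpos : 0 < (z i).val := Nat.pos_of_ne_zero (fun h => hi (by
      rwa [← ZMod.val_eq_zero]))
    have hvlt : (z i).val < nn i := ZMod.val_lt _
    rcases le_or_gt t 0 with htle | htpos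
    · have : t * (nn i : ℤ) ≤ 0 :=
        mul_nonpos_of_nonpos_of_nonneg htle (by positivity)
      omega
    · have h1t : (1 : ℤ) ≤ t := htpos
      have : (nn i : ℤ) ≤ t * (nn i : ℤ) := by
        nlinarith
      omega
  -- shift trick
  have hshift : ∑ d : PiG nn, rho nn d z = (∑ d : PiG nn, rho nn d z) * rho nn d₀ z := by
    conv_lhs => rw [← Equiv.sum_comp (Equiv.addRight d₀) (fun d => rho nn d z)]
    rw [Finset.sum_mul]
    refine Finset.sum_congr rfl fun d _ => ?_
    show rho nn (d + d₀) z = _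
    rw [rho_comm_s14 nn (d + d₀), rho_add_right_s14, rho_comm_s14 nn z d, rho_comm_s14 nn z d₀]
  have hfac : (∑ d : PiG nn, rho nn d z) * (rho nn d₀ z - 1) = 0 := by
    linear_combination -hshift
  rcases mul_eq_zero.mp hfac with h | h
  · exact h
  · exact absurd (sub_eq_zero.mp h) hne1

lemma rho_zero_left {k : ℕ} (nn : Fin k → ℕ) [∀ i, NeZero (nn i)] (x : PiG nn) :
    rho nn 0 x = 1 := by rw [rho_comm_s14, rho_zero]

lemma conj_rho_mul {k : ℕ} (nn : Fin k → ℕ) [∀ i, NeZero (nn i)] (g x y : PiG nn) :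
    (starRingEnd ℂ) (rho nn g x) * rho nn g y = rho nn g (y - x) := by
  rw [conj_rho_s14, ← rho_add_right_s14, neg_add_eq_sub]


/-- The vector `f_x = (1/√m) (ρ_{g_j}(x))_{j=1}^m` of the `G`-harmonic frame
generated by `S = {g_1, ..., g_m}`. -/
noncomputable def harm {k m : ℕ} (nn : Fin k → ℕ) (g : Fin m → PiG nn) (x : PiG nn) :
    EuclideanSpace ℂ (Fin m) :=
  (WithLp.equiv 2 (Fin m → ℂ)).symm fun j => ((Real.sqrt m : ℝ) : ℂ)⁻¹ * rho nn (g j) x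

/-- The frame angle `|⟨f_x, f_y⟩|`. -/
noncomputable def ang {k m : ℕ} (nn : Fin k → ℕ) (g : Fin m → PiG nn) (x y : PiG nn) : ℝ :=
  ‖(inner ℂ (harm nn g x) (harm nn g y) : ℂ)‖

/-- The set of frame angles `Θ = { |⟨f_x, f_y⟩| : x ≠ y }` of the harmonic frame. -/
noncomputable def anglesSet {k m : ℕ} (nn : Fin k → ℕ) (g : Fin m → PiG nn) : Set ℝ :=
  {r : ℝ | ∃ x y : PiG nn, x ≠ y ∧ ang nn g x y = r}

lemma inner_harm {k m : ℕ} (nn : Fin k → ℕ) [∀ i, NeZero (nn i)]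
    (g : Fin m → PiG nn) (x y : PiG nn) :
    (inner ℂ (harm nn g x) (harm nn g y) : ℂ) = ((m : ℕ) : ℂ)⁻¹ * ∑ j, rho nn (g j) (y - x) := by
  have hc : ((Real.sqrt m : ℝ) : ℂ)⁻¹ * ((Real.sqrt m : ℝ) : ℂ)⁻¹ = ((m : ℕ) : ℂ)⁻¹ := by
    rw [← mul_inv, ← Complex.ofReal_mul, Real.mul_self_sqrt (Nat.cast_nonneg m)]
    simp
  simp only [harm, PiLp.inner_apply, RCLike.inner_apply, WithLp.equiv_symm_apply, PiLp.toLp_apply]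
  rw [Finset.mul_sum]
  refine Finset.sum_congr rfl fun j _ => ?_
  rw [map_mul, map_inv₀, Complex.conj_ofReal]
  rw [← conj_rho_mul nn (g j) x y]
  ring_nf
  rw [mul_comm]
  ring_nf
  rw [← hc]
  ring

lemma ang_eq {k m : ℕ} (nn : Fin k → ℕ) [∀ i, NeZero (nn i)]
    (g : Fin m → PiG nn) (x y : PiG nn) :
    ang nn g x y = ‖∑ j, rho nn (g j) (y - x)‖ / m := by
  rw [ang, inner_harm, norm_mul]
  rw [norm_inv, Complex.norm_natCast, div_eq_inv_mul]

lemma anglesSet_eq {k m : ℕ} (nn : Fin k → ℕ) [∀ i, NeZero (nn i)]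
    (g : Fin m → PiG nn) :
    anglesSet nn g = (fun z => ‖∑ j, rho nn (g j) z‖ / m) '' {z : PiG nn | z ≠ 0} := by
  ext r
  constructor
  · rintro ⟨x, y, hxy, rfl⟩
    exact ⟨y - x, sub_ne_zero.2 (Ne.symm hxy), (ang_eq nn g x y).symm⟩
  · rintro ⟨z, hz, rfl⟩
    refine ⟨0, z, fun h => hz h.symm, ?_⟩
    rw [ang_eq, sub_zero]


/-- The harmonic frame is a tight frame (with the forced constant `n/m`):
`∑_x f_x ⊗ f_x^* = (n/m) I_m` as operators. -/
noncomputable def IsTightHarm {k m : ℕ} (nn : Fin k → ℕ) [∀ i, NeZero (nn i)]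
    (g : Fin m → PiG nn) : Prop :=
  ∀ v : EuclideanSpace ℂ (Fin m),
    ∑ x : PiG nn, (inner ℂ (harm nn g x) v : ℂ) • harm nn g x =
      ((Fintype.card (PiG nn) : ℂ) / (m : ℂ)) • v

/-- `diffCount g x` is the number of ways to write `x = g_a - g_b` with `g_a ≠ g_b`
distinct elements of `S = {g_1, ..., g_m}`. -/
noncomputable def diffCount {G : Type*} [AddCommGroup G] {m : ℕ} (g : Fin m → G) (x : G) : ℕ :=
  Nat.card {p : Fin m × Fin m // p.1 ≠ p.2 ∧ g p.1 - g p.2 = x}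

lemma quad_rel {k m : ℕ} (nn : Fin k → ℕ) [∀ i, NeZero (nn i)]
    (g : Fin m → PiG nn) (hg : Function.Injective g) (lam mu : ℕ)
    (hlam : ∀ x ∈ insert (0 : PiG nn) (Set.range g), x ≠ 0 → diffCount g x = lam)
    (hmu : ∀ x : PiG nn, x ∉ insert (0 : PiG nn) (Set.range g) → diffCount g x = mu) :
    ∃ C : ℂ, (starRingEnd ℂ) C = C ∧
      ∀ z : PiG nn, z ≠ 0 →
        (∑ j, rho nn (g j) z) * (starRingEnd ℂ) (∑ j, rho nn (g j) z)
          = ((lam : ℂ) - (mu : ℂ)) * (∑ j, rho nn (g j) z) + C := by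
  classical
  refine ⟨(m : ℂ) - (lam : ℂ) * (if (0:PiG nn) ∈ Set.range g then (1:ℂ) else 0)
      - (mu : ℂ) * (1 - (if (0:PiG nn) ∈ Set.range g then (1:ℂ) else 0)), by split <;> simp, ?_⟩
  intro z hz
  set c : PiG nn → ℕ :=
    fun d => #{p ∈ (Finset.univ : Finset (Fin m × Fin m)) | g p.1 - g p.2 = d} with hc
  have stepA : (∑ j, rho nn (g j) z) * (starRingEnd ℂ) (∑ j, rho nn (g j) z)
      = ∑ p : Fin m × Fin m, rho nn (g p.1 - g p.2) z := by
    rw [map_sum, Finset.sum_mul_sum, Fintype.sum_prod_type]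
    refine Finset.sum_congr rfl fun a _ => Finset.sum_congr rfl fun b _ => ?_
    rw [rho_comm_s14 nn (g a) z, rho_comm_s14 nn (g b) z, mul_comm,
      conj_rho_mul nn z (g b) (g a)]
    exact rho_comm_s14 nn z _
  have stepB : ∑ p : Fin m × Fin m, rho nn (g p.1 - g p.2) z
      = ∑ d : PiG nn, c d • rho nn d z := by
    rw [Finset.sum_comp (fun d => rho nn d z) (fun p : Fin m × Fin m => g p.1 - g p.2)]
    refine Finset.sum_subset (Finset.subset_univ _) fun d _ hd => ?_
    have h0 : c d = 0 := by
      rw [hc]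
      show #(Finset.filter (fun p : Fin m × Fin m => g p.1 - g p.2 = d) Finset.univ) = 0
      rw [Finset.card_eq_zero, Finset.filter_eq_empty_iff]
      intro p _
      exact fun h => hd (Finset.mem_image.2 ⟨p, Finset.mem_univ p, h⟩)
    show c d • rho nn d z = 0
    rw [h0, zero_smul]
  have step0 : c 0 = m := by
    show #(Finset.filter (fun p : Fin m × Fin m => g p.1 - g p.2 = (0:PiG nn)) Finset.univ) = m
    have hset : {p ∈ (Finset.univ : Finset (Fin m × Fin m)) | g p.1 - g p.2 = (0:PiG nn)}
        = {p ∈ (Finset.univ : Finset (Fin m × Fin m)) | p.1 = p.2} := by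
      ext p
      simp only [Finset.mem_filter, Finset.mem_univ, true_and, sub_eq_zero]
      exact ⟨fun h => hg h, fun h => by rw [h]⟩
    rw [hset]
    have hcard : #(Finset.filter (fun p : Fin m × Fin m => p.1 = p.2) Finset.univ)
        = #(Finset.univ : Finset (Fin m)) := by
      refine Finset.card_bij' (fun p _ => p.1) (fun j _ => (j, j)) ?_ ?_ ?_ ?_
      · intro a ha
        exact Finset.mem_univ _
      · intro a ha
        simp
      · intro a ha
        have h2 := (Finset.mem_filter.1 ha).2
        exact Prod.ext rfl h2
      · intro a ha
        rfl
    rw [hcard, Finset.card_univ, Fintype.card_fin]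
  have stepD : ∀ d : PiG nn, d ≠ 0 → c d = diffCount g d := by
    intro d hd
    show #(Finset.filter (fun p : Fin m × Fin m => g p.1 - g p.2 = d) Finset.univ) = diffCount g d
    rw [diffCount, Nat.card_eq_fintype_card, Fintype.card_subtype]
    congr 1
    ext p
    simp only [Finset.mem_filter, Finset.mem_univ, true_and]
    constructor
    · intro h
      refine ⟨fun hpe => hd ?_, h⟩
      rw [← h, hpe, sub_self]
    · exact fun h => h.2
  set S₀ : Finset (PiG nn) := insert (0:PiG nn) (Finset.univ.image g) with hS₀
  have h0mem : (0:PiG nn) ∈ S₀ := Finset.mem_insert_self _ _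
  have hmemS₀ : ∀ d : PiG nn, d ∈ S₀ ↔ d ∈ insert (0:PiG nn) (Set.range g) := by
    intro d
    simp [hS₀, Finset.mem_insert, Finset.mem_image, Set.mem_insert_iff, Set.mem_range]
  have hT : ∑ d ∈ Finset.univ.image g, rho nn d z = ∑ j, rho nn (g j) z :=
    Finset.sum_image fun x _ y _ h => hg h
  have husum : ∑ d : PiG nn, rho nn d z = 0 := sum_rho_eq_zero nn z hz
  have compl : ∑ d ∈ S₀ᶜ, rho nn d z = -∑ d ∈ S₀, rho nn d z := by
    have h := Finset.sum_add_sum_compl S₀ (fun d => rho nn d z)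
    rw [husum] at h
    linear_combination h
  have erase0 : ∑ d ∈ S₀.erase 0, rho nn d z = (∑ d ∈ S₀, rho nn d z) - 1 := by
    rw [← Finset.add_sum_erase _ _ h0mem, rho_zero_left]
    ring
  have split0 : ∑ d : PiG nn, c d • rho nn d z
      = (m : ℂ) + ∑ d ∈ Finset.univ.erase 0, c d • rho nn d z := by
    rw [← Finset.add_sum_erase _ _ (Finset.mem_univ (0:PiG nn)), step0, rho_zero_left]
    rw [nsmul_eq_mul, mul_one]
  have erase_eq : ∑ d ∈ Finset.univ.erase 0, c d • rho nn d z
      = (lam:ℂ) * (∑ d ∈ S₀.erase 0, rho nn d z) + (mu:ℂ) * (∑ d ∈ S₀ᶜ, rho nn d z) := by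
    have hcoef : ∀ d ∈ Finset.univ.erase (0:PiG nn),
        (c d • rho nn d z : ℂ) = if d ∈ S₀ then (lam:ℂ) * rho nn d z else (mu:ℂ) * rho nn d z := by
      intro d hd
      have hd0 : d ≠ 0 := (Finset.mem_erase.1 hd).1
      rw [stepD d hd0, nsmul_eq_mul]
      by_cases hmem : d ∈ S₀
      · rw [if_pos hmem, hlam d ((hmemS₀ d).1 hmem) hd0]
      · rw [if_neg hmem, hmu d (fun hc2 => hmem ((hmemS₀ d).2 hc2))]
    rw [Finset.sum_congr rfl hcoef, Finset.sum_ite]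
    have hf1 : {d ∈ Finset.univ.erase (0:PiG nn) | d ∈ S₀} = S₀.erase 0 := by
      ext d
      simp only [Finset.mem_filter, Finset.mem_erase, Finset.mem_univ, true_and, and_true]
    have hf2 : {d ∈ Finset.univ.erase (0:PiG nn) | d ∉ S₀} = S₀ᶜ := by
      ext d
      simp only [Finset.mem_filter, Finset.mem_erase, Finset.mem_univ, true_and, and_true,
        Finset.mem_compl]
      constructor
      · exact fun h => h.2
      · intro h
        exact ⟨fun h0 => h (h0 ▸ h0mem), h⟩
    rw [hf1, hf2, Finset.mul_sum, Finset.mul_sum]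
  calc (∑ j, rho nn (g j) z) * (starRingEnd ℂ) (∑ j, rho nn (g j) z)
      = ∑ p : Fin m × Fin m, rho nn (g p.1 - g p.2) z := stepA
    _ = ∑ d : PiG nn, c d • rho nn d z := stepB
    _ = (m : ℂ) + ∑ d ∈ Finset.univ.erase 0, c d • rho nn d z := split0
    _ = (m:ℂ) + ((lam:ℂ) * (∑ d ∈ S₀.erase 0, rho nn d z)
          + (mu:ℂ) * (∑ d ∈ S₀ᶜ, rho nn d z)) := by rw [erase_eq]
    _ = _ := by
        rw [erase0, compl]
        by_cases h0 : (0:PiG nn) ∈ Set.range g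
        · have h1 : S₀ = Finset.univ.image g := Finset.insert_eq_self.2 (by
            obtain ⟨j, hj⟩ := h0
            exact Finset.mem_image.2 ⟨j, Finset.mem_univ j, hj⟩)
          rw [if_pos h0, h1, hT]
          ring
        · have h1 : (0:PiG nn) ∉ Finset.univ.image g := fun hc2 => h0 (by
            obtain ⟨j, _, hj⟩ := Finset.mem_image.1 hc2
            exact ⟨j, hj⟩)
          rw [if_neg h0, hS₀, Finset.sum_insert h1, hT, rho_zero_left]
          ring


/-- Let `S` be an `(n, m, λ, μ)`-partial difference set for `G` with
`λ ≠ μ`, and let `F` be the (biangular) `G`-harmonic frame for `ℂ^m` generated by `S`.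
Then: (1) if `0 ∈ S`, the `G`-harmonic frame for `ℂ^{m-1}` generated by `S \ {0}` is
either equiangular or biangular; and (2) if `0 ∉ S`, the `G`-harmonic frame for `ℂ^{m+1}`
generated by `S ∪ {0}` is either equiangular or biangular. -/
theorem statement14 {k m : ℕ} (nn : Fin k → ℕ) [∀ i, NeZero (nn i)] (hm : 0 < m)
    (g : Fin m → PiG nn) (hg : Function.Injective g) (lam mu : ℕ)
    (hlam : ∀ x ∈ insert (0 : PiG nn) (Set.range g), x ≠ 0 → diffCount g x = lam)
    (hmu : ∀ x : PiG nn, x ∉ insert (0 : PiG nn) (Set.range g) → diffCount g x = mu)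
    (hne : lam ≠ mu)
    (hbi : (anglesSet nn g).ncard = 2) :
    ((0 : PiG nn) ∈ Set.range g →
      ∀ g' : Fin (m - 1) → PiG nn, Function.Injective g' →
        Set.range g' = Set.range g \ {0} →
          (anglesSet nn g').ncard = 1 ∨ (anglesSet nn g').ncard = 2) ∧
    ((0 : PiG nn) ∉ Set.range g →
      ∀ g' : Fin (m + 1) → PiG nn, Function.Injective g' →
        Set.range g' = insert (0 : PiG nn) (Set.range g) →
          (anglesSet nn g').ncard = 1 ∨ (anglesSet nn g').ncard = 2) := by
  classical
  obtain ⟨C, hCconj, hq⟩ := quad_rel nn g hg lam mu hlam hmu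
  set c₁ : ℂ := (lam : ℂ) - mu with hc₁
  have hc₁ne : c₁ ≠ 0 := sub_ne_zero.2 fun h => hne (Nat.cast_injective h)
  have hreal : ∀ z : PiG nn, z ≠ 0 →
      (starRingEnd ℂ) (∑ j, rho nn (g j) z) = ∑ j, rho nn (g j) z := by
    intro z hz
    have h1 := hq z hz
    have h2 := congrArg (starRingEnd ℂ) h1
    simp only [map_mul, map_add, map_sub, map_natCast, Complex.conj_conj] at h2
    have hconj_c : (starRingEnd ℂ) c₁ = c₁ := by rw [hc₁]; simp
    rw [hCconj, hconj_c] at h2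
    have h3 : c₁ * ((∑ j, rho nn (g j) z) - (starRingEnd ℂ) (∑ j, rho nn (g j) z)) = 0 := by
      rw [hc₁]
      linear_combination h2 - h1
    rcases mul_eq_zero.mp h3 with h | h
    · exact absurd h hc₁ne
    · exact (sub_eq_zero.mp h).symm
  have hq2 : ∀ z : PiG nn, z ≠ 0 →
      (∑ j, rho nn (g j) z) * (∑ j, rho nn (g j) z) = c₁ * (∑ j, rho nn (g j) z) + C := by
    intro z hz
    have h1 := hq z hz
    rwa [hreal z hz] at h1
  -- nonzero element exists
  obtain ⟨z₀, hz₀⟩ : ∃ z : PiG nn, z ≠ 0 := by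
    by_contra h
    push_neg at h
    have hempty : anglesSet nn g = ∅ := by
      ext r
      simp only [anglesSet, Set.mem_setOf_eq, Set.mem_empty_iff_false, iff_false]
      rintro ⟨x, y, hxy, -⟩
      exact hxy ((h x).trans (h y).symm)
    rw [hempty, Set.ncard_empty] at hbi
    exact two_ne_zero hbi.symm
  -- at most two values of the sum
  obtain ⟨t₀, t₁, hkey⟩ : ∃ t₀ t₁ : ℂ, ∀ z : PiG nn, z ≠ 0 →
      (∑ j, rho nn (g j) z) = t₀ ∨ (∑ j, rho nn (g j) z) = t₁ := by
    by_cases hone : ∀ z : PiG nn, z ≠ 0 → (∑ j, rho nn (g j) z) = ∑ j, rho nn (g j) z₀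
    · exact ⟨∑ j, rho nn (g j) z₀, ∑ j, rho nn (g j) z₀, fun z hz => Or.inl (hone z hz)⟩
    · push_neg at hone
      obtain ⟨z₁, hz₁, hne1⟩ := hone
      refine ⟨∑ j, rho nn (g j) z₀, ∑ j, rho nn (g j) z₁, fun z hz => ?_⟩
      by_contra hcon
      push_neg at hcon
      obtain ⟨hc0, hc1⟩ := hcon
      have e0 := hq2 z hz
      have e1 := hq2 z₀ hz₀
      have e2 := hq2 z₁ hz₁
      have f1 : ((∑ j, rho nn (g j) z) - (∑ j, rho nn (g j) z₀))
          * ((∑ j, rho nn (g j) z) + (∑ j, rho nn (g j) z₀) - c₁) = 0 := by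
        linear_combination e0 - e1
      have f2 : ((∑ j, rho nn (g j) z) - (∑ j, rho nn (g j) z₁))
          * ((∑ j, rho nn (g j) z) + (∑ j, rho nn (g j) z₁) - c₁) = 0 := by
        linear_combination e0 - e2
      have g1 : (∑ j, rho nn (g j) z) + (∑ j, rho nn (g j) z₀) - c₁ = 0 := by
        rcases mul_eq_zero.mp f1 with h | h
        · exact absurd (sub_eq_zero.mp h) hc0
        · exact h
      have g2 : (∑ j, rho nn (g j) z) + (∑ j, rho nn (g j) z₁) - c₁ = 0 := by
        rcases mul_eq_zero.mp f2 with h | h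
        · exact absurd (sub_eq_zero.mp h) hc1
        · exact h
      apply hne1
      linear_combination g2 - g1
  -- uniform finishing argument
  have hT : ∀ z : PiG nn, ∑ d ∈ Finset.univ.image g, rho nn d z = ∑ j, rho nn (g j) z :=
    fun z => Finset.sum_image fun x _ y _ h => hg h
  have finish : ∀ (m' : ℕ) (g' : Fin m' → PiG nn) (δ : ℂ),
      (∀ z : PiG nn, z ≠ 0 → (∑ j, rho nn (g' j) z) = (∑ j, rho nn (g j) z) + δ) →
      (anglesSet nn g').ncard = 1 ∨ (anglesSet nn g').ncard = 2 := by
    intro m' g' δ hδ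
    have hsub : anglesSet nn g' ⊆ {‖t₀ + δ‖ / m', ‖t₁ + δ‖ / m'} := by
      rw [anglesSet_eq]
      rintro r ⟨z, hz, rfl⟩
      simp only [Set.mem_insert_iff, Set.mem_singleton_iff]
      rcases hkey z hz with h | h
      · left
        show ‖∑ j, rho nn (g' j) z‖ / (m' : ℝ) = _
        rw [hδ z hz, h]
      · right
        show ‖∑ j, rho nn (g' j) z‖ / (m' : ℝ) = _
        rw [hδ z hz, h]
    have hne' : (anglesSet nn g').Nonempty := by
      rw [anglesSet_eq]
      exact ⟨_, z₀, hz₀, rfl⟩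
    have hfinpair : ({‖t₀ + δ‖ / m', ‖t₁ + δ‖ / m'} : Set ℝ).Finite :=
      (Set.finite_singleton _).insert _
    have hle : (anglesSet nn g').ncard ≤ 2 := by
      refine le_trans (Set.ncard_le_ncard hsub hfinpair) ?_
      refine le_trans (Set.ncard_insert_le _ _) ?_
      simp [Set.ncard_singleton]
    have hge : 1 ≤ (anglesSet nn g').ncard := by
      have hfin : (anglesSet nn g').Finite := hfinpair.subset hsub
      exact (Set.ncard_pos hfin).2 hne'
    omega
  constructor
  · intro h0 g' hg'inj hrange
    refine finish _ g' (-1) fun z hz => ?_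
    have h0img : (0 : PiG nn) ∈ Finset.univ.image g := by
      obtain ⟨j, hj⟩ := h0
      exact Finset.mem_image.2 ⟨j, Finset.mem_univ j, hj⟩
    have himg : Finset.univ.image g' = (Finset.univ.image g).erase 0 := by
      apply Finset.coe_injective
      rw [Finset.coe_image, Finset.coe_univ, Set.image_univ, hrange, Finset.coe_erase,
        Finset.coe_image, Finset.coe_univ, Set.image_univ]
    have hsum := Finset.add_sum_erase (Finset.univ.image g) (fun d => rho nn d z) h0img
    have hz0 : rho nn 0 z = 1 := rho_zero_left nn z
    calc ∑ j, rho nn (g' j) z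
        = ∑ d ∈ Finset.univ.image g', rho nn d z :=
          (Finset.sum_image (f := fun d => rho nn d z) fun x _ y _ h => hg'inj h).symm
      _ = ∑ d ∈ (Finset.univ.image g).erase 0, rho nn d z := by rw [himg]
      _ = (∑ j, rho nn (g j) z) + (-1) := by linear_combination hsum + hT z - hz0
  · intro h0 g' hg'inj hrange
    refine finish _ g' 1 fun z hz => ?_
    have h0img : (0 : PiG nn) ∉ Finset.univ.image g := by
      intro hc
      obtain ⟨j, -, hj⟩ := Finset.mem_image.1 hc
      exact h0 ⟨j, hj⟩
    have himg : Finset.univ.image g' = insert 0 (Finset.univ.image g) := by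
      apply Finset.coe_injective
      rw [Finset.coe_image, Finset.coe_univ, Set.image_univ, hrange, Finset.coe_insert,
        Finset.coe_image, Finset.coe_univ, Set.image_univ]
    calc ∑ j, rho nn (g' j) z
        = ∑ d ∈ Finset.univ.image g', rho nn d z :=
          (Finset.sum_image (f := fun d => rho nn d z) fun x _ y _ h => hg'inj h).symm
      _ = ∑ d ∈ insert 0 (Finset.univ.image g), rho nn d z := by rw [himg]
      _ = (∑ j, rho nn (g j) z) + 1 := by
          rw [Finset.sum_insert h0img, rho_zero_left, hT z]
          ring
end

section
/- Let p be a prime of the form p = 8q + 5 with q > 0 and q odd. Then R^{(4)}_p is a proper (p, (p-1)/4, (p+1)/2, lambda, mu)-bidifference set for Z_p relative to R^{(2)}_p union {0} (i.e. with lambda != mu); moreover R^{(4)}_p is a Gaussian difference set for Z_p, but it is not a partial difference set for Z_p and it is not a divisible difference set for Z_p. -/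
/-- The set `R⁽²⁾_p = { z² : z ∈ (ZMod p)* }` of quadratic residues mod `p`. -/
def quadRes (p : ℕ) : Set (ZMod p) := {x | ∃ z : ZMod p, z ≠ 0 ∧ z ^ 2 = x}

/-- The set `R⁽⁴⁾_p = { z⁴ : z ∈ (ZMod p)* }` of quartic residues mod `p`. -/
def quartRes (p : ℕ) : Set (ZMod p) := {x | ∃ z : ZMod p, z ≠ 0 ∧ z ^ 4 = x}

/-- `diffCountSet S x` is the number of ways to write `x = a - b` with `a ≠ b` distinct
elements of `S`. -/
noncomputable def diffCountSet {G : Type*} [AddCommGroup G] (S : Set G) (x : G) : ℕ :=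
  Nat.card {q : G × G // q.1 ∈ S ∧ q.2 ∈ S ∧ q.1 ≠ q.2 ∧ q.1 - q.2 = x}

/-- `S` is an `(n, |S|, |A|, λ, μ)`-bidifference set for `G` relative to `A`: `0 ∈ A`,
every nonzero element of `A` is a difference of distinct elements of `S` in exactly `λ`
ways, and every element of `G \ A` in exactly `μ` ways. -/
def IsBidiffRel {G : Type*} [AddCommGroup G] (S A : Set G) (lam mu : ℕ) : Prop :=
  (0 : G) ∈ A ∧
  (∀ x ∈ A, x ≠ 0 → diffCountSet S x = lam) ∧
  (∀ x : G, x ∉ A → diffCountSet S x = mu)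

section Aux

open Finset Polynomial

attribute [local instance] Classical.propDecidable

variable {p q : ℕ} [hp : Fact p.Prime]

/-- Existence of a primitive `n`-th root of unity in `ZMod p` when `n ∣ p - 1`. -/
lemma aux_prim {n : ℕ} (_hn : 0 < n) (hd : n ∣ p - 1) :
    ∃ ζ : ZMod p, IsPrimitiveRoot ζ n := by
  obtain ⟨g, hg⟩ := IsCyclic.exists_ofOrder_eq_natCard (α := (ZMod p)ˣ)
  have hcard : Nat.card (ZMod p)ˣ = p - 1 := by
    rw [Nat.card_eq_fintype_card, ZMod.card_units_eq_totient, Nat.totient_prime hp.out]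
  obtain ⟨k, hk⟩ := hd
  have hp1 : 0 < p - 1 := by
    have := hp.out.two_le; omega
  have hk0 : 0 < k := by
    rcases Nat.eq_zero_or_pos k with h | h
    · subst h; omega
    · exact h
  refine ⟨((g ^ k : (ZMod p)ˣ) : ZMod p), ?_⟩
  rw [IsPrimitiveRoot.coe_units_iff]
  have hord : orderOf (g ^ k) = n := by
    rw [orderOf_pow, hg, hcard, hk]
    have hgcd : Nat.gcd (n * k) k = k := by
      simp
    rw [hgcd, Nat.mul_div_cancel _ hk0]
  rw [← hord]
  exact IsPrimitiveRoot.orderOf _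

lemma mem_quartRes_iff (hq : Odd q) (hpq : p = 8 * q + 5) {x : ZMod p} :
    x ∈ quartRes p ↔ x ^ (2 * q + 1) = 1 := by
  constructor
  · rintro ⟨z, hz, rfl⟩
    rw [← pow_mul]
    have h4 : 4 * (2 * q + 1) = p - 1 := by omega
    rw [h4, ZMod.pow_card_sub_one_eq_one hz]
  · intro h
    obtain ⟨r, rfl⟩ := hq
    have hx : x ≠ 0 := by
      rintro rfl
      rw [zero_pow (by omega : 2 * (2 * r + 1) + 1 ≠ 0)] at h
      exact one_ne_zero h.symm
    refine ⟨x ^ (r + 1), pow_ne_zero _ hx, ?_⟩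
    rw [← pow_mul]
    have : (r + 1) * 4 = (2 * (2 * r + 1) + 1) + 1 := by ring
    rw [this, pow_succ, h, one_mul]

lemma mem_quadRes_iff {x : ZMod p} :
    x ∈ quadRes p ↔ x ≠ 0 ∧ IsSquare x := by
  constructor
  · rintro ⟨z, hz, rfl⟩
    exact ⟨pow_ne_zero _ hz, ⟨z, (sq z)⟩⟩
  · rintro ⟨hx, z, rfl⟩
    have hz : z ≠ 0 := by
      rintro rfl; exact hx (mul_zero 0)
    exact ⟨z, hz, sq z⟩

lemma mem_quadRes_iff' (hpq : p = 8 * q + 5) {x : ZMod p} :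
    x ∈ quadRes p ↔ x ^ (4 * q + 2) = 1 := by
  have hhalf : p / 2 = 4 * q + 2 := by omega
  rw [mem_quadRes_iff]
  constructor
  · rintro ⟨hx, hsq⟩
    rw [← hhalf]
    exact (ZMod.euler_criterion p hx).mp hsq
  · intro h
    have hx : x ≠ 0 := by
      rintro rfl
      rw [zero_pow (by omega : 4 * q + 2 ≠ 0)] at h
      exact one_ne_zero h.symm
    exact ⟨hx, (ZMod.euler_criterion p hx).mpr (by rw [hhalf]; exact h)⟩

lemma quartRes_eq (hq : Odd q) (hpq : p = 8 * q + 5) :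
    quartRes p = ↑(nthRootsFinset (2 * q + 1) (1 : ZMod p)) := by
  ext x
  rw [Finset.mem_coe, mem_nthRootsFinset (by omega : 0 < 2 * q + 1) (1 : ZMod p)]
  exact mem_quartRes_iff hq hpq

lemma quadRes_eq (hpq : p = 8 * q + 5) :
    quadRes p = ↑(nthRootsFinset (4 * q + 2) (1 : ZMod p)) := by
  ext x
  rw [Finset.mem_coe, mem_nthRootsFinset (by omega : 0 < 4 * q + 2) (1 : ZMod p)]
  exact mem_quadRes_iff' hpq

lemma quartRes_ncard (hq : Odd q) (hpq : p = 8 * q + 5) :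
    (quartRes p).ncard = 2 * q + 1 := by
  obtain ⟨ζ, hζ⟩ := aux_prim (p := p) (show 0 < 2 * q + 1 by omega) ⟨4, by omega⟩
  rw [quartRes_eq hq hpq, Set.ncard_coe_finset, hζ.card_nthRootsFinset]

lemma quadRes_ncard (hpq : p = 8 * q + 5) :
    (quadRes p).ncard = 4 * q + 2 := by
  obtain ⟨ζ, hζ⟩ := aux_prim (p := p) (show 0 < 4 * q + 2 by omega) ⟨2, by omega⟩
  rw [quadRes_eq hpq, Set.ncard_coe_finset, hζ.card_nthRootsFinset]

lemma diffCountSet_eq_filter (S : Set (ZMod p)) (x : ZMod p) :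
    diffCountSet S x =
      (Finset.univ.filter (fun ab : ZMod p × ZMod p =>
        ab.1 ∈ S ∧ ab.2 ∈ S ∧ ab.1 ≠ ab.2 ∧ ab.1 - ab.2 = x)).card := by
  rw [diffCountSet, Nat.card_eq_fintype_card, Fintype.card_subtype]

lemma diffCount_neg (S : Set (ZMod p)) (x : ZMod p) :
    diffCountSet S (-x) = diffCountSet S x := by
  unfold diffCountSet
  apply Nat.card_congr
  refine ⟨fun a => ⟨(a.1.2, a.1.1), a.2.2.1, a.2.1, a.2.2.2.1.symm, ?_⟩,
          fun a => ⟨(a.1.2, a.1.1), a.2.2.1, a.2.1, a.2.2.2.1.symm, ?_⟩,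
          fun a => rfl, fun a => rfl⟩
  · show a.1.2 - a.1.1 = x
    rw [← neg_sub a.1.1 a.1.2, a.2.2.2.2, neg_neg]
  · show a.1.2 - a.1.1 = -x
    rw [← neg_sub a.1.1 a.1.2, a.2.2.2.2]

lemma diffCount_mul (hq : Odd q) (hpq : p = 8 * q + 5) {u : ZMod p}
    (hu : u ^ (2 * q + 1) = 1) (x : ZMod p) :
    diffCountSet (quartRes p) (u * x) = diffCountSet (quartRes p) x := by
  have hu0 : u ≠ 0 := by
    rintro rfl
    rw [zero_pow (by omega : 2 * q + 1 ≠ 0)] at hu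
    exact one_ne_zero hu.symm
  unfold diffCountSet
  refine (Nat.card_congr ?_).symm
  refine Equiv.subtypeEquiv
    (Equiv.prodCongr (Equiv.mulLeft₀ u hu0) (Equiv.mulLeft₀ u hu0)) (fun ab => ?_)
  have hmem : ∀ a : ZMod p, u * a ∈ quartRes p ↔ a ∈ quartRes p := by
    intro a
    rw [mem_quartRes_iff hq hpq, mem_quartRes_iff hq hpq, mul_pow, hu, one_mul]
  constructor
  · rintro ⟨h1, h2, h3, h4⟩
    refine ⟨(hmem _).mpr h1, (hmem _).mpr h2, ?_, ?_⟩
    · simp only [Equiv.prodCongr_apply, Equiv.mulLeft₀_apply, Prod.map]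
      exact fun h => h3 (mul_left_cancel₀ hu0 h)
    · simp only [Equiv.prodCongr_apply, Equiv.mulLeft₀_apply, Prod.map]
      rw [← mul_sub, h4]
  · rintro ⟨h1, h2, h3, h4⟩
    simp only [Equiv.prodCongr_apply, Equiv.mulLeft₀_apply, Prod.map] at h1 h2 h3 h4
    refine ⟨(hmem _).mp h1, (hmem _).mp h2, fun h => h3 (by rw [h]), ?_⟩
    rw [← mul_sub] at h4
    exact mul_left_cancel₀ hu0 h4

lemma diffCount_sq_mul (hq : Odd q) (hpq : p = 8 * q + 5) {y : ZMod p}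
    (hy : y ^ (4 * q + 2) = 1) (x : ZMod p) :
    diffCountSet (quartRes p) (y * x) = diffCountSet (quartRes p) x := by
  have h2 : (y ^ (2 * q + 1)) * (y ^ (2 * q + 1)) = 1 := by
    rw [← pow_add]
    have : 2 * q + 1 + (2 * q + 1) = 4 * q + 2 := by ring
    rw [this, hy]
  rcases mul_self_eq_one_iff.mp h2 with h | h
  · exact diffCount_mul hq hpq h x
  · have hodd : Odd (2 * q + 1) := ⟨q, by ring⟩
    have hny : (-y) ^ (2 * q + 1) = 1 := by
      rw [hodd.neg_pow, h, neg_neg]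
    calc diffCountSet (quartRes p) (y * x)
        = diffCountSet (quartRes p) (-(y * x)) := (diffCount_neg _ _).symm
      _ = diffCountSet (quartRes p) ((-y) * x) := by rw [neg_mul]
      _ = diffCountSet (quartRes p) x := diffCount_mul hq hpq hny x

lemma diffCount_const_sq (hq : Odd q) (hpq : p = 8 * q + 5) {x : ZMod p}
    (hx : x ≠ 0) (hsq : IsSquare x) :
    diffCountSet (quartRes p) x = diffCountSet (quartRes p) 1 := by
  have hx2 : x ^ (4 * q + 2) = 1 := (mem_quadRes_iff' hpq).mp (mem_quadRes_iff.mpr ⟨hx, hsq⟩)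
  have := diffCount_sq_mul hq hpq hx2 (1 : ZMod p)
  rwa [mul_one] at this

lemma nonsquare_pow_half (hpq : p = 8 * q + 5) {x : ZMod p} (hx : ¬ IsSquare x) :
    x ^ (4 * q + 2) = -1 := by
  have hx0 : x ≠ 0 := by
    rintro rfl; exact hx ⟨0, (mul_zero 0).symm⟩
  have h2 : (x ^ (4 * q + 2)) * (x ^ (4 * q + 2)) = 1 := by
    rw [← pow_add]
    have h8 : 4 * q + 2 + (4 * q + 2) = p - 1 := by omega
    rw [h8, ZMod.pow_card_sub_one_eq_one hx0]
  rcases mul_self_eq_one_iff.mp h2 with h | h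
  · exact absurd (mem_quadRes_iff.mp ((mem_quadRes_iff' hpq).mpr h)).2 hx
  · exact h

lemma diffCount_const_nonsq (hq : Odd q) (hpq : p = 8 * q + 5) {x n₀ : ZMod p}
    (hx : ¬ IsSquare x) (hn : ¬ IsSquare n₀) :
    diffCountSet (quartRes p) x = diffCountSet (quartRes p) n₀ := by
  have hn0 : n₀ ≠ 0 := by rintro rfl; exact hn ⟨0, (mul_zero 0).symm⟩
  have hy : (x * n₀⁻¹) ^ (4 * q + 2) = 1 := by
    rw [mul_pow, nonsquare_pow_half hpq hx, inv_pow, nonsquare_pow_half hpq hn]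
    simp
  have := diffCount_sq_mul hq hpq hy n₀
  rwa [mul_assoc, inv_mul_cancel₀ hn0, mul_one] at this

lemma diffCount_zero (S : Set (ZMod p)) : diffCountSet S 0 = 0 := by
  have : IsEmpty {ab : ZMod p × ZMod p //
      ab.1 ∈ S ∧ ab.2 ∈ S ∧ ab.1 ≠ ab.2 ∧ ab.1 - ab.2 = 0} := by
    refine ⟨fun a => a.2.2.2.1 (sub_eq_zero.mp a.2.2.2.2)⟩
  rw [diffCountSet]
  exact Nat.card_of_isEmpty

/-- Double counting: `λ + μ = q`. -/
lemma lam_add_mu (hq : Odd q) (hpq : p = 8 * q + 5) {n₀ : ZMod p}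
    (hn : ¬ IsSquare n₀) :
    diffCountSet (quartRes p) 1 + diffCountSet (quartRes p) n₀ = q := by
  obtain ⟨ζ, hζ⟩ := aux_prim (p := p) (show 0 < 2 * q + 1 by omega) ⟨4, by omega⟩
  obtain ⟨ξ, hξ⟩ := aux_prim (p := p) (show 0 < 4 * q + 2 by omega) ⟨2, by omega⟩
  set lam := diffCountSet (quartRes p) 1 with hlam
  set mu := diffCountSet (quartRes p) n₀ with hmu
  set g : ZMod p → ℕ := fun x => (Finset.univ.filter (fun ab : ZMod p × ZMod p =>
      ab.1 ∈ quartRes p ∧ ab.2 ∈ quartRes p ∧ ab.1 ≠ ab.2 ∧ ab.1 - ab.2 = x)).card with hgdef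
  have hg : ∀ x, g x = diffCountSet (quartRes p) x :=
    fun x => (diffCountSet_eq_filter _ _).symm
  have hmemS : ∀ a : ZMod p, a ∈ quartRes p ↔ a ∈ nthRootsFinset (2 * q + 1) (1 : ZMod p) :=
    fun a => (mem_quartRes_iff hq hpq).trans
      (mem_nthRootsFinset (by omega : 0 < 2 * q + 1) (1 : ZMod p)).symm
  set T := (nthRootsFinset (2 * q + 1) (1 : ZMod p)).offDiag with hT
  -- total count via fibers
  have htotal : T.card = ∑ x : ZMod p, g x := by
    rw [Finset.card_eq_sum_card_fiberwise
      (f := fun ab : ZMod p × ZMod p => ab.1 - ab.2) (t := Finset.univ)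
      (fun _ _ => Finset.mem_univ _)]
    refine Finset.sum_congr rfl fun x _ => ?_
    congr 1
    ext ab
    simp only [Finset.mem_filter, Finset.mem_univ, true_and, hT, Finset.mem_offDiag, hmemS]
    tauto
  have hTcard : T.card = (2 * q + 1) * (2 * q + 1) - (2 * q + 1) := by
    rw [hT, Finset.offDiag_card, hζ.card_nthRootsFinset]
  have hg0 : g 0 = 0 := by rw [hg]; exact diffCount_zero _
  -- the quadratic residues finset
  set Q := nthRootsFinset (4 * q + 2) (1 : ZMod p) with hQ
  have hQmem : ∀ x : ZMod p, x ∈ Q ↔ x ≠ 0 ∧ IsSquare x := by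
    intro x
    rw [hQ, ← Finset.mem_coe, ← quadRes_eq hpq]
    exact mem_quadRes_iff
  have hQcard : Q.card = 4 * q + 2 := hξ.card_nthRootsFinset
  have h0Q : (0 : ZMod p) ∉ Q := fun h => ((hQmem 0).mp h).1 rfl
  have hsq_filter : Finset.univ.filter (fun x : ZMod p => IsSquare x) = insert 0 Q := by
    ext x
    simp only [Finset.mem_filter, Finset.mem_univ, true_and, Finset.mem_insert, hQmem]
    constructor
    · intro hx
      by_cases h : x = 0
      · exact Or.inl h
      · exact Or.inr ⟨h, hx⟩
    · rintro (rfl | ⟨-, hx⟩)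
      · exact ⟨0, (mul_zero 0).symm⟩
      · exact hx
  have hsum_sq : ∑ x ∈ Finset.univ.filter (fun x : ZMod p => IsSquare x), g x
      = (4 * q + 2) * lam := by
    rw [hsq_filter, Finset.sum_insert h0Q, hg0, zero_add]
    rw [Finset.sum_congr rfl (fun x hx => ?_), Finset.sum_const, hQcard, smul_eq_mul]
    obtain ⟨hx0, hxsq⟩ := (hQmem x).mp hx
    rw [hg, hlam]
    exact diffCount_const_sq hq hpq hx0 hxsq
  have hBcard : (Finset.univ.filter (fun x : ZMod p => ¬ IsSquare x)).card = 4 * q + 2 := by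
    have h1 : (Finset.univ.filter (fun x : ZMod p => IsSquare x)).card = 4 * q + 3 := by
      rw [hsq_filter, Finset.card_insert_of_notMem h0Q, hQcard]
    have h2 := Finset.card_filter_add_card_filter_not
      (s := (Finset.univ : Finset (ZMod p))) (p := fun x : ZMod p => IsSquare x)
    have h3 : (Finset.univ : Finset (ZMod p)).card = p := by
      rw [Finset.card_univ, ZMod.card]
    omega
  have hsum_nsq : ∑ x ∈ Finset.univ.filter (fun x : ZMod p => ¬ IsSquare x), g x
      = (4 * q + 2) * mu := by
    rw [Finset.sum_congr rfl (fun x hx => ?_), Finset.sum_const, hBcard, smul_eq_mul]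
    rw [Finset.mem_filter] at hx
    rw [hg, hmu]
    exact diffCount_const_nonsq hq hpq hx.2 hn
  have hsplit : ∑ x : ZMod p, g x = (4 * q + 2) * lam + (4 * q + 2) * mu := by
    rw [← Finset.sum_filter_add_sum_filter_not Finset.univ (fun x : ZMod p => IsSquare x) g,
      hsum_sq, hsum_nsq]
  have hkey : (4 * q + 2) * (lam + mu) = (4 * q + 2) * q := by
    have h1 : (2 * q + 1) * (2 * q + 1) - (2 * q + 1) = (4 * q + 2) * q := by
      have h : (2 * q + 1) * (2 * q + 1) = (4 * q + 2) * q + (2 * q + 1) := by ring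
      omega
    rw [mul_add]
    rw [← hsum_sq, ← hsum_nsq,
      Finset.sum_filter_add_sum_filter_not Finset.univ (fun x : ZMod p => IsSquare x) g,
      ← htotal, hTcard, h1]
  exact Nat.eq_of_mul_eq_mul_left (by omega : 0 < 4 * q + 2) hkey

lemma mem_H_of_mem {H : AddSubgroup (ZMod p)} {c : ZMod p} (hc : c ∈ H) (hc0 : c ≠ 0)
    (x : ZMod p) : x ∈ H := by
  have key : ((x * c⁻¹).val) • c = x := by
    rw [nsmul_eq_mul, ZMod.natCast_val, ZMod.cast_id, mul_assoc, inv_mul_cancel₀ hc0, mul_one]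
  rw [← key]
  exact AddSubgroup.nsmul_mem H hc _

end Aux

/-- Let `p` be a prime of the form `p = 8q + 5` with `q > 0` odd.  Then
`R⁽⁴⁾_p` is a proper `(p, (p-1)/4, (p+1)/2, λ, μ)`-bidifference set for `ZMod p` relative
to `R⁽²⁾_p ∪ {0}` (i.e. with `λ ≠ μ`) — in particular a Gaussian difference set — but it
is not a partial difference set (a bidifference set relative to `R⁽⁴⁾_p ∪ {0}`) and not a
divisible difference set (a bidifference set relative to a subgroup) for `ZMod p`. -/
theorem statement17 (p q : ℕ) (hp : p.Prime) (hq : 0 < q) (hqodd : Odd q)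
    (hpq : p = 8 * q + 5) :
    (quartRes p).ncard = (p - 1) / 4 ∧
    (insert (0 : ZMod p) (quadRes p)).ncard = (p + 1) / 2 ∧
    (∃ lam mu : ℕ, lam ≠ mu ∧
      IsBidiffRel (quartRes p) (insert (0 : ZMod p) (quadRes p)) lam mu) ∧
    (¬ ∃ lam mu : ℕ,
      IsBidiffRel (quartRes p) (insert (0 : ZMod p) (quartRes p)) lam mu) ∧
    (¬ ∃ (H : AddSubgroup (ZMod p)) (lam mu : ℕ),
      IsBidiffRel (quartRes p) (H : Set (ZMod p)) lam mu) := by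
  haveI : Fact p.Prime := ⟨hp⟩
  -- a fixed nonsquare
  obtain ⟨n₀, hn₀⟩ := FiniteField.exists_nonsquare
    (F := ZMod p) (by rw [ZMod.ringChar_zmod_n]; omega)
  have hn₀0 : n₀ ≠ 0 := by rintro rfl; exact hn₀ ⟨0, (mul_zero 0).symm⟩
  set lam := diffCountSet (quartRes p) 1 with hlam
  set mu := diffCountSet (quartRes p) n₀ with hmu
  have hsum : lam + mu = q := lam_add_mu hqodd hpq hn₀
  have hne : lam ≠ mu := by
    intro h
    rw [h] at hsum
    obtain ⟨r, hr⟩ := hqodd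
    omega
  have hone0 : (1 : ZMod p) ≠ 0 := one_ne_zero
  have hneg1_ne_one : (-1 : ZMod p) ≠ 1 := by
    intro h
    have h2 : ((2 : ℕ) : ZMod p) = 0 := by
      push_cast
      linear_combination -h
    rw [ZMod.natCast_eq_zero_iff] at h2
    have := Nat.le_of_dvd (by norm_num) h2
    omega
  -- N(x) constancy facts
  have hconstQ : ∀ x : ZMod p, x ≠ 0 → IsSquare x → diffCountSet (quartRes p) x = lam :=
    fun x hx hsq => diffCount_const_sq hqodd hpq hx hsq
  have hconstN : ∀ x : ZMod p, ¬ IsSquare x → diffCountSet (quartRes p) x = mu :=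
    fun x hx => diffCount_const_nonsq hqodd hpq hx hn₀
  -- membership facts
  have hone_mem : (1 : ZMod p) ∈ quartRes p := ⟨1, one_ne_zero, one_pow 4⟩
  have hneg1_not : (-1 : ZMod p) ∉ quartRes p := by
    rw [mem_quartRes_iff hqodd hpq]
    have hodd : Odd (2 * q + 1) := ⟨q, by ring⟩
    rw [hodd.neg_pow, one_pow]
    exact fun h => hneg1_ne_one h
  have hquart_sq : ∀ x : ZMod p, x ∈ quartRes p → IsSquare x := by
    rintro x ⟨z, hz, rfl⟩
    exact ⟨z ^ 2, by ring⟩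
  have hn₀_not : n₀ ∉ quartRes p := fun h => hn₀ (hquart_sq _ h)
  refine ⟨?_, ?_, ?_, ?_, ?_⟩
  · -- cardinality of quartRes
    rw [quartRes_ncard hqodd hpq]
    omega
  · -- cardinality of insert 0 quadRes
    have h0 : (0 : ZMod p) ∉ quadRes p := fun h => (mem_quadRes_iff.mp h).1 rfl
    rw [Set.ncard_insert_of_notMem h0 (Set.toFinite _), quadRes_ncard hpq]
    omega
  · -- bidifference set relative to quadRes ∪ {0}, with lam ≠ mu
    refine ⟨lam, mu, hne, Set.mem_insert _ _, ?_, ?_⟩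
    · intro x hx hx0
      rcases Set.mem_insert_iff.mp hx with h | h
      · exact absurd h hx0
      · exact hconstQ x hx0 (mem_quadRes_iff.mp h).2
    · intro x hx
      refine hconstN x fun hsq => ?_
      by_cases h0 : x = 0
      · exact hx (h0 ▸ Set.mem_insert _ _)
      · exact hx (Set.mem_insert_of_mem _ (mem_quadRes_iff.mpr ⟨h0, hsq⟩))
  · -- not a partial difference set
    rintro ⟨l, m, -, h2, h3⟩
    have hl : lam = l := by
      rw [hlam]
      exact h2 1 (Set.mem_insert_of_mem _ hone_mem) hone0
    have hm1 : diffCountSet (quartRes p) (-1) = m := by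
      refine h3 (-1) fun h => ?_
      rcases Set.mem_insert_iff.mp h with h | h
      · exact one_ne_zero (neg_eq_zero.mp h)
      · exact hneg1_not h
    have hm2 : diffCountSet (quartRes p) n₀ = m := by
      refine h3 n₀ fun h => ?_
      rcases Set.mem_insert_iff.mp h with h | h
      · exact hn₀0 h
      · exact hn₀_not h
    have : lam = m := by
      rw [hlam, ← diffCount_neg (quartRes p) 1]
      exact hm1
    exact hne (by rw [this, ← hm2, hmu])
  · -- not a divisible difference set
    rintro ⟨H, l, m, -, h2, h3⟩
    by_cases h1H : (1 : ZMod p) ∈ H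
    · have hall : ∀ x : ZMod p, x ∈ H := mem_H_of_mem h1H one_ne_zero
      have e1 : lam = l := by
        rw [hlam]; exact h2 1 (hall 1) hone0
      have e2 : mu = l := by
        rw [hmu]; exact h2 n₀ (hall n₀) hn₀0
      exact hne (by rw [e1, e2])
    · have e1 : lam = m := by rw [hlam]; exact h3 1 h1H
      by_cases hn₀H : n₀ ∈ H
      · exact h1H (mem_H_of_mem hn₀H hn₀0 1)
      · have e2 : mu = m := by rw [hmu]; exact h3 n₀ hn₀H
        exact hne (by rw [e1, e2])
end
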